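/- Let e ≥ 1 and r be natural numbers with r ≤ e, and let b, c ∈ k be nonzero. There exists a nonzero Laurent series g ∈ k((u)) with b·u^r·g = c⁻¹·u^e·g^p if and only if (p−1) divides e − r and b·c is a (p−1)-st power in k^× (i.e., there exists nonzero x ∈ k with x^{p−1} = b·c). -/

import Mathlib

lemma hahn_leadingCoeff_mul {k : Type*} [Field k] {x y : HahnSeries ℤ k}
    (hx : x ≠ 0) (hy : y ≠ 0) :
    (x * y).leadingCoeff = x.leadingCoeff * y.leadingCoeff := by
  rw [HahnSeries.leadingCoeff_eq, HahnSeries.order_mul hx hy,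
    HahnSeries.coeff_mul_order_add_order]

lemma hahn_leadingCoeff_pow {k : Type*} [Field k] (x : HahnSeries ℤ k)
    (hx : x ≠ 0) (n : ℕ) : (x ^ n).leadingCoeff = x.leadingCoeff ^ n := by
  induction n with
  | zero => simp [HahnSeries.leadingCoeff_one]
  | succ m ih => rw [pow_succ, hahn_leadingCoeff_mul (pow_ne_zero _ hx) hx, ih, pow_succ]

theorem rank_one_BK_order_in_KCp_iff
    (p : ℕ) (hp : p.Prime) (k : Type*) [Field k] [CharP k p]
    (e r : ℕ) (he : 1 ≤ e) (hre : r ≤ e)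
    (b c : k) (hb : b ≠ 0) (hc : c ≠ 0) :
    (∃ g : LaurentSeries k, g ≠ 0 ∧
        HahnSeries.single (0 : ℤ) b * HahnSeries.single (r : ℤ) (1 : k) * g
          = HahnSeries.single (0 : ℤ) c⁻¹ * HahnSeries.single (e : ℤ) (1 : k) * g ^ p) ↔
      ((p - 1) ∣ (e - r) ∧ ∃ x : k, x ≠ 0 ∧ x ^ (p - 1) = b * c) := by
  have hc' : c⁻¹ ≠ 0 := inv_ne_zero hc
  constructor
  · rintro ⟨g, hg, heq⟩
    rw [HahnSeries.single_mul_single, HahnSeries.single_mul_single, zero_add, zero_add,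
      mul_one, mul_one] at heq
    set n := g.order with hn
    set a := g.leadingCoeff with ha'
    have ha : a ≠ 0 := HahnSeries.leadingCoeff_ne_zero.mpr hg
    have hsb : (HahnSeries.single (r : ℤ) b : LaurentSeries k) ≠ 0 :=
      HahnSeries.single_ne_zero hb
    have hsc : (HahnSeries.single (e : ℤ) c⁻¹ : LaurentSeries k) ≠ 0 :=
      HahnSeries.single_ne_zero hc'
    have hgp : g ^ p ≠ 0 := pow_ne_zero _ hg
    -- order equation
    have hord : (r : ℤ) + n = (e : ℤ) + p • n := by
      have := congrArg HahnSeries.order heq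
      rwa [HahnSeries.order_mul hsb hg, HahnSeries.order_mul hsc hgp,
        HahnSeries.order_single hb, HahnSeries.order_single hc',
        HahnSeries.order_pow] at this
    have hpn : (p : ℤ) • n = (p : ℤ) * n := by simp
    have hord' : (e : ℤ) - (r : ℤ) = ((p : ℤ) - 1) * (-n) := by
      have : (r : ℤ) + n = (e : ℤ) + (p : ℤ) * n := by
        rw [hord]; norm_num
      ring_nf
      ring_nf at this
      linarith
    -- leading coefficient equation
    have hlc : b * a = c⁻¹ * a ^ p := by
      have := congrArg HahnSeries.leadingCoeff heq
      rwa [hahn_leadingCoeff_mul hsb hg, hahn_leadingCoeff_mul hsc hgp,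
        HahnSeries.leadingCoeff_of_single, HahnSeries.leadingCoeff_of_single,
        hahn_leadingCoeff_pow _ hg] at this
    refine ⟨?_, a, ha, ?_⟩
    · have hcast : ((e - r : ℕ) : ℤ) = ((p - 1 : ℕ) : ℤ) * (-n) := by
        rw [Nat.cast_sub hre, Nat.cast_sub hp.one_le, Nat.cast_one, hord']
      have : ((p - 1 : ℕ) : ℤ) ∣ ((e - r : ℕ) : ℤ) := ⟨-n, hcast⟩
      exact_mod_cast this
    · have hpow : a ^ (p - 1) * a = a ^ p := by
        rw [← pow_succ, Nat.sub_add_cancel hp.one_le]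
      have : a ^ (p - 1) * a = (b * c) * a := by
        rw [hpow]
        field_simp at hlc
        linear_combination -hlc
      exact mul_right_cancel₀ ha this
  · rintro ⟨⟨m, hm⟩, x, hx, hxp⟩
    refine ⟨HahnSeries.single (-(m : ℤ)) x, HahnSeries.single_ne_zero hx, ?_⟩
    rw [HahnSeries.single_pow, HahnSeries.single_mul_single, HahnSeries.single_mul_single,
      HahnSeries.single_mul_single, HahnSeries.single_mul_single]
    have hexp : (0 : ℤ) + (r : ℤ) + -(m : ℤ) = 0 + (e : ℤ) + p • (-(m : ℤ)) := by
      have : (e : ℤ) - (r : ℤ) = ((p : ℤ) - 1) * m := by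
        have := congrArg (Nat.cast : ℕ → ℤ) hm
        rw [Nat.cast_sub hre, Nat.cast_mul, Nat.cast_sub hp.one_le, Nat.cast_one] at this
        exact this
      simp only [nsmul_eq_mul, zero_add]
      linarith
    have hcoeff : b * 1 * x = c⁻¹ * 1 * x ^ p := by
      have hxpp : x ^ p = (b * c) * x := by
        rw [← Nat.sub_add_cancel hp.one_le, pow_succ, hxp]
      rw [hxpp]; field_simp
    rw [hexp, hcoeff]
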